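/- arXiv:1210.5561 — 3 statements merged into one kernel-verified Lean document; each statement's English description precedes it below -/
import Mathlib

section
/- The number of independent k-subsets of the h-th power of a path on n vertices containing the vertex i equals the sum over r from 0 to k-1 of p̄(i-h-1, r) * p̄(n-i-h, k-1-r), where p̄(m, r) is the number of independent r-subsets of the h-th power of a path on max(m, 0) vertices. -/
/-- Independent subsets of the h-th power of the path on n vertices:
subsets of {1,...,n} with all pairwise differences of distinct elements greater than h. -/
def pathSubsets (n h : ℕ) : Finset (Finset ℕ) :=
  (Finset.Icc 1 n).powerset.filter (fun S => ∀ i ∈ S, ∀ j ∈ S, i < j → i + h < j)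

def pathCount (n h k : ℕ) : ℕ := ((pathSubsets n h).filter (fun S => S.card = k)).card

def pathTotal (n h : ℕ) : ℕ := (pathSubsets n h).card

/-- Independent subsets of the h-th power of the cycle on n vertices:
subsets S of {1,...,n} with h < |i-j| < n-h for all distinct i,j ∈ S. -/
def cycleSubsets (n h : ℕ) : Finset (Finset ℕ) :=
  (Finset.Icc 1 n).powerset.filter
    (fun S => ∀ i ∈ S, ∀ j ∈ S, i < j → i + h < j ∧ j + h < n + i)

def cycleCount (n h k : ℕ) : ℕ := ((cycleSubsets n h).filter (fun S => S.card = k)).card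

def cycleTotal (n h : ℕ) : ℕ := (cycleSubsets n h).card

/-- Number of edges of the Hasse diagram of independent subsets of Pₙ⁽ʰ⁾ ordered by inclusion. -/
def pathEdges (n h : ℕ) : ℕ :=
  (((pathSubsets n h) ×ˢ (pathSubsets n h)).filter
    (fun p => p.1 ⊆ p.2 ∧ p.2.card = p.1.card + 1)).card

/-- Number of edges of the Hasse diagram of independent subsets of Cₙ⁽ʰ⁾ ordered by inclusion. -/
def cycleEdges (n h : ℕ) : ℕ :=
  (((cycleSubsets n h) ×ˢ (cycleSubsets n h)).filter
    (fun p => p.1 ⊆ p.2 ∧ p.2.card = p.1.card + 1)).card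

lemma mem_pathSubsets {n h : ℕ} {S : Finset ℕ} :
    S ∈ pathSubsets n h ↔ (∀ x ∈ S, 1 ≤ x ∧ x ≤ n) ∧ ∀ a ∈ S, ∀ b ∈ S, a < b → a + h < b := by
  simp [pathSubsets, Finset.subset_iff, Finset.mem_Icc, forall_and]

theorem stmt8 (n h k i : ℕ) (hi1 : 1 ≤ i) (hi2 : i ≤ n) :
    ((pathSubsets n h).filter (fun S => S.card = k ∧ i ∈ S)).card
      = ∑ r ∈ Finset.range k,
          pathCount ((i : ℤ) - h - 1).toNat h r *
          pathCount ((n : ℤ) - i - h).toNat h (k - 1 - r) := by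

  have hm1 : ((i : ℤ) - h - 1).toNat = i - h - 1 := by omega
  have hm2 : ((n : ℤ) - i - h).toNat = n - i - h := by omega
  rw [hm1, hm2]
  have hRHS : (((pathSubsets (i-h-1) h) ×ˢ (pathSubsets (n-i-h) h)).filter
      (fun p => p.1.card + p.2.card + 1 = k)).card
      = ∑ r ∈ Finset.range k, pathCount (i-h-1) h r * pathCount (n-i-h) h (k - 1 - r) := by
    rw [Finset.card_eq_sum_card_fiberwise (f := fun p => p.1.card) (t := Finset.range k)
      (s := ((pathSubsets (i-h-1) h) ×ˢ (pathSubsets (n-i-h) h)).filter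
        (fun p => p.1.card + p.2.card + 1 = k))
      (by intro p hp; simp only [Finset.mem_coe, Finset.mem_filter] at hp; exact Finset.mem_range.2 (by show p.1.card < k; omega))]
    refine Finset.sum_congr rfl fun r hr => ?_
    simp only [Finset.mem_range] at hr
    rw [Finset.filter_filter]
    have heq : (Finset.filter (fun p : Finset ℕ × Finset ℕ =>
        p.1.card + p.2.card + 1 = k ∧ p.1.card = r)
          ((pathSubsets (i-h-1) h) ×ˢ (pathSubsets (n-i-h) h)))
        = ((pathSubsets (i-h-1) h).filter (fun S => S.card = r)) ×ˢ
          ((pathSubsets (n-i-h) h).filter (fun S => S.card = k - 1 - r)) := by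
      ext p
      simp only [Finset.mem_filter, Finset.mem_product]
      constructor
      · rintro ⟨⟨h1, h2⟩, h3, h4⟩
        exact ⟨⟨h1, h4⟩, h2, by omega⟩
      · rintro ⟨⟨h1, h4⟩, ⟨h2, h5⟩⟩
        exact ⟨⟨h1, h2⟩, by omega, h4⟩
    rw [heq, Finset.card_product]
    rfl
  rw [← hRHS]
  refine Finset.card_bij'
    (fun S _ => (S.filter (· < i), (S.filter (i < ·)).image (fun j => j - (i + h))))
    (fun p _ => p.1 ∪ insert i (p.2.image (fun b => b + (i + h)))) ?_ ?_ ?_ ?_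
  · -- maps to
    intro S hS
    simp only [Finset.mem_filter] at hS
    obtain ⟨hSmem, hScard, hiS⟩ := hS
    rw [mem_pathSubsets] at hSmem
    obtain ⟨hrange, hindep⟩ := hSmem
    have hAi : ∀ a ∈ S, a < i → a + h < i := fun a ha hlt => hindep a ha i hiS hlt
    have hiB : ∀ b ∈ S, i < b → i + h < b := fun b hb hlt => hindep i hiS b hb hlt
    simp only [Finset.mem_filter, Finset.mem_product]
    refine ⟨⟨?_, ?_⟩, ?_⟩
    · rw [mem_pathSubsets]
      constructor
      · intro x hx
        simp only [Finset.mem_filter] at hx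
        have := hrange x hx.1
        have := hAi x hx.1 hx.2
        omega
      · intro a ha b hb hab
        simp only [Finset.mem_filter] at ha hb
        exact hindep a ha.1 b hb.1 hab
    · rw [mem_pathSubsets]
      constructor
      · intro x hx
        simp only [Finset.mem_image, Finset.mem_filter] at hx
        obtain ⟨b, ⟨hbS, hbi⟩, rfl⟩ := hx
        have := hrange b hbS
        have := hiB b hbS hbi
        omega
      · intro a ha b hb hab
        simp only [Finset.mem_image, Finset.mem_filter] at ha hb
        obtain ⟨x, ⟨hxS, hxi⟩, rfl⟩ := ha
        obtain ⟨y, ⟨hyS, hyi⟩, rfl⟩ := hb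
        have hxh := hiB x hxS hxi
        have hyh := hiB y hyS hyi
        have hxy : x < y := by omega
        have := hindep x hxS y hyS hxy
        show x - (i + h) + h < y - (i + h)
        omega
    · -- cardinality
      have hcard1 : ((S.filter (i < ·)).image (fun j => j - (i + h))).card
          = (S.filter (i < ·)).card := by
        rw [Finset.card_image_of_injOn]
        intro x hx y hy hxy
        simp only [Finset.mem_filter, Finset.mem_coe] at hx hy
        have := hiB x hx.1 hx.2
        have := hiB y hy.1 hy.2
        have hxy' : x - (i + h) = y - (i + h) := hxy
        omega
      have hsplit : (S.filter (· < i)).card + (S.filter (¬ · < i)).card = S.card :=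
        Finset.card_filter_add_card_filter_not _
      have hge : S.filter (fun x => ¬ x < i) = insert i (S.filter (i < ·)) := by
        ext x
        simp only [Finset.mem_filter, Finset.mem_insert, not_lt]
        constructor
        · rintro ⟨hxS, hix⟩
          rcases eq_or_lt_of_le hix with h' | h'
          · exact Or.inl h'.symm
          · exact Or.inr ⟨hxS, h'⟩
        · rintro (rfl | ⟨hxS, hix⟩)
          · exact ⟨hiS, le_refl _⟩
          · exact ⟨hxS, le_of_lt hix⟩
      have hni : i ∉ S.filter (i < ·) := by simp
      rw [hge, Finset.card_insert_of_notMem hni] at hsplit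
      show (S.filter (· < i)).card
          + ((S.filter (i < ·)).image (fun j => j - (i + h))).card + 1 = k
      omega
  · -- reverse maps to
    intro p hp
    simp only [Finset.mem_filter, Finset.mem_product] at hp
    obtain ⟨⟨hA, hB⟩, hcard⟩ := hp
    rw [mem_pathSubsets] at hA hB
    obtain ⟨hArange, hAindep⟩ := hA
    obtain ⟨hBrange, hBindep⟩ := hB
    have hmem : ∀ x, x ∈ p.1 ∪ insert i (p.2.image (fun b => b + (i + h))) ↔
        x ∈ p.1 ∨ x = i ∨ ∃ b ∈ p.2, x = b + (i + h) := by
      intro x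
      simp only [Finset.mem_union, Finset.mem_insert, Finset.mem_image]
      constructor
      · rintro (h' | h' | ⟨b, hb, rfl⟩)
        · exact Or.inl h'
        · exact Or.inr (Or.inl h')
        · exact Or.inr (Or.inr ⟨b, hb, rfl⟩)
      · rintro (h' | h' | ⟨b, hb, rfl⟩)
        · exact Or.inl h'
        · exact Or.inr (Or.inl h')
        · exact Or.inr (Or.inr ⟨b, hb, rfl⟩)
    simp only [Finset.mem_filter]
    refine ⟨?_, ?_, ?_⟩
    · rw [mem_pathSubsets]
      constructor
      · intro x hx
        rw [hmem] at hx
        rcases hx with h' | rfl | ⟨b, hb, rfl⟩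
        · have := hArange x h'; omega
        · omega
        · have := hBrange b hb; omega
      · intro a ha b hb hab
        rw [hmem] at ha hb
        rcases ha with ha | rfl | ⟨x, hx, rfl⟩ <;>
          rcases hb with hb | hb | ⟨y, hy, hbe⟩
        · exact hAindep a ha b hb hab
        · subst hb; have := hArange a ha; omega
        · subst hbe; have := hArange a ha; have := hBrange y hy; omega
        · have := hArange b hb; omega
        · omega
        · subst hbe; have := hBrange y hy; omega
        · have := hArange b hb; have := hBrange x hx; omega
        · subst hb; have := hBrange x hx; omega
        · subst hbe
          have hxy : x < y := by omega
          have := hBindep x hx y hy hxy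
          omega
    · -- card
      have him : (p.2.image (fun b => b + (i + h))).card = p.2.card :=
        Finset.card_image_of_injOn (fun x _ y _ hxy => by omega)
      have hdisj : Disjoint p.1 (insert i (p.2.image (fun b => b + (i + h)))) := by
        rw [Finset.disjoint_left]
        intro x hx hx'
        have hxr := hArange x hx
        simp only [Finset.mem_insert, Finset.mem_image] at hx'
        rcases hx' with rfl | ⟨b, hb, rfl⟩
        · omega
        · have := hBrange b hb; omega
      have hni : i ∉ p.2.image (fun b => b + (i + h)) := by
        simp only [Finset.mem_image, not_exists]
        rintro x ⟨hx, he⟩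
        have := hBrange x hx; omega
      rw [Finset.card_union_of_disjoint hdisj, Finset.card_insert_of_notMem hni, him]
      omega
    · rw [hmem]; exact Or.inr (Or.inl rfl)
  · -- left inverse : j (i S) = S
    intro S hS
    simp only [Finset.mem_filter] at hS
    obtain ⟨hSmem, hScard, hiS⟩ := hS
    rw [mem_pathSubsets] at hSmem
    obtain ⟨hrange, hindep⟩ := hSmem
    have hiB : ∀ b ∈ S, i < b → i + h < b := fun b hb hlt => hindep i hiS b hb hlt
    dsimp only
    ext x
    simp only [Finset.mem_union, Finset.mem_insert, Finset.mem_image, Finset.mem_filter]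
    constructor
    · rintro (⟨hxS, _⟩ | rfl | ⟨y, ⟨b, ⟨hbS, hbi⟩, rfl⟩, rfl⟩)
      · exact hxS
      · exact hiS
      · have h' := hiB b hbS hbi
        have he : b - (i + h) + (i + h) = b := by omega
        rw [he]; exact hbS
    · intro hxS
      rcases lt_trichotomy x i with h' | rfl | h'
      · exact Or.inl ⟨hxS, h'⟩
      · exact Or.inr (Or.inl rfl)
      · refine Or.inr (Or.inr ⟨x - (i + h), ⟨x, ⟨hxS, h'⟩, rfl⟩, ?_⟩)
        have := hiB x hxS h'
        omega
  · -- right inverse : i (j p) = p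
    intro p hp
    simp only [Finset.mem_filter, Finset.mem_product] at hp
    obtain ⟨⟨hA, hB⟩, hcard⟩ := hp
    rw [mem_pathSubsets] at hA hB
    obtain ⟨hArange, hAindep⟩ := hA
    obtain ⟨hBrange, hBindep⟩ := hB
    have h1 : (p.1 ∪ insert i (p.2.image (fun b => b + (i + h)))).filter (· < i) = p.1 := by
      ext x
      simp only [Finset.mem_filter, Finset.mem_union, Finset.mem_insert, Finset.mem_image]
      constructor
      · rintro ⟨(h' | rfl | ⟨b, hb, rfl⟩), hxi⟩
        · exact h'
        · omega
        · have := hBrange b hb; omega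
      · intro hx
        have := hArange x hx
        exact ⟨Or.inl hx, by omega⟩
    have h2 : (p.1 ∪ insert i (p.2.image (fun b => b + (i + h)))).filter (i < ·) =
        p.2.image (fun b => b + (i + h)) := by
      ext x
      simp only [Finset.mem_filter, Finset.mem_union, Finset.mem_insert, Finset.mem_image]
      constructor
      · rintro ⟨(h' | rfl | ⟨b, hb, rfl⟩), hxi⟩
        · have := hArange x h'; omega
        · omega
        · exact ⟨b, hb, rfl⟩
      · rintro ⟨b, hb, rfl⟩
        have := hBrange b hb
        exact ⟨Or.inr (Or.inr ⟨b, hb, rfl⟩), by omega⟩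
    rw [h1, h2]
    have h3 : (p.2.image (fun b => b + (i + h))).image (fun j => j - (i + h)) = p.2 := by
      ext x
      simp only [Finset.mem_image]
      constructor
      · rintro ⟨y, ⟨b, hb, rfl⟩, rfl⟩
        simpa using hb
      · intro hx
        exact ⟨x + (i + h), ⟨x, hx, rfl⟩, by simp⟩
    rw [h3]
end

section
/- The number of independent subsets of the h-th power of a path on n vertices that contain a fixed vertex i equals p̄(i-h-1) * p̄(n-h-i), where p̄(m) is the total number of independent subsets of the h-th power of a path on max(m,0) vertices. -/
lemma mem_ps {n h : ℕ} {S : Finset ℕ} :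
    S ∈ pathSubsets n h ↔
      (∀ x ∈ S, 1 ≤ x ∧ x ≤ n) ∧ ∀ i ∈ S, ∀ j ∈ S, i < j → i + h < j := by
  simp [pathSubsets, Finset.subset_iff, Finset.mem_Icc, and_assoc]

theorem stmt9 (n h i : ℕ) (hi1 : 1 ≤ i) (hi2 : i ≤ n) :
    ((pathSubsets n h).filter (fun S => i ∈ S)).card
      = pathTotal ((i : ℤ) - h - 1).toNat h * pathTotal ((n : ℤ) - h - i).toNat h := by
  classical
  rw [pathTotal, pathTotal, ← Finset.card_product]
  apply Finset.card_nbij'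
    (fun S => (S.filter (· < i), (S.filter (i < ·)).image (· - (i + h))))
    (fun p => p.1 ∪ {i} ∪ p.2.image (· + (i + h)))
  · rintro S hS
    rw [Finset.mem_coe, Finset.mem_filter] at hS
    obtain ⟨hS, hiS⟩ := hS
    rw [mem_ps] at hS
    obtain ⟨hsub, hind⟩ := hS
    -- every x in S other than i is either ≤ i-h-1 or ≥ i+h+1
    have key : ∀ x ∈ S, x + h < i ∨ x = i ∨ i + h < x := by
      intro x hx
      rcases lt_trichotomy x i with hlt | he | hgt
      · exact Or.inl (hind x hx i hiS hlt)
      · exact Or.inr (Or.inl he)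
      · exact Or.inr (Or.inr (hind i hiS x hx hgt))
    rw [Finset.mem_coe, Finset.mem_product]
    constructor
    · rw [mem_ps]
      constructor
      · intro x hx
        simp only [Finset.mem_filter] at hx
        obtain ⟨hxS, hxi⟩ := hx
        have := hsub x hxS
        have := key x hxS
        omega
      · intro a ha b hb hab
        simp only [Finset.mem_filter] at ha hb
        exact hind a ha.1 b hb.1 hab
    · rw [mem_ps]
      constructor
      · intro y hy
        simp only [Finset.mem_image, Finset.mem_filter] at hy
        obtain ⟨x, ⟨hxS, hxi⟩, rfl⟩ := hy
        have := hsub x hxS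
        have := key x hxS
        omega
      · intro a ha b hb hab
        simp only [Finset.mem_image, Finset.mem_filter] at ha hb
        obtain ⟨x, ⟨hxS, hxi⟩, rfl⟩ := ha
        obtain ⟨y, ⟨hyS, hyi⟩, rfl⟩ := hb
        have hx' := key x hxS
        have hy' := key y hyS
        have : x < y := by omega
        have := hind x hxS y hyS this
        omega
  · rintro ⟨A, B⟩ hp
    rw [Finset.mem_coe, Finset.mem_product, mem_ps, mem_ps] at hp
    obtain ⟨⟨hAsub, hAind⟩, hBsub, hBind⟩ := hp
    rw [Finset.mem_coe, Finset.mem_filter, mem_ps]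
    have memU : ∀ x, x ∈ A ∪ {i} ∪ B.image (· + (i + h)) ↔
        x ∈ A ∨ x = i ∨ ∃ y ∈ B, y + (i + h) = x := by
      intro x; simp [Finset.mem_union, or_assoc, or_left_comm]
    have bound : ∀ x, (x ∈ A ∨ x = i ∨ ∃ y ∈ B, y + (i + h) = x) →
        (1 ≤ x ∧ x ≤ n ∧ (x + h < i ∨ x = i ∨ i + h < x)) := by
      rintro x (hx | rfl | ⟨y, hy, rfl⟩)
      · have := hAsub x hx; omega
      · omega
      · have := hBsub y hy; omega
    refine ⟨⟨fun x hx => ?_, fun a ha b hb hab => ?_⟩, ?_⟩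
    · have := bound x ((memU x).1 hx); omega
    · rw [memU] at ha hb
      have Ha := bound a ha
      have Hb := bound b hb
      rcases ha with ha | rfl | ⟨y, hy, rfl⟩ <;> rcases hb with hb | rfl | ⟨z, hz, rfl⟩
      · exact hAind a ha b hb hab
      · have := hAsub a ha; omega
      · have := hAsub a ha; have := hBsub z hz; omega
      · have := hAsub b hb; omega
      · omega
      · have := hBsub z hz; omega
      · have := hAsub b hb; have := hBsub y hy; omega
      · have := hBsub y hy; omega
      · have hyz : y < z := by omega
        have := hBind y hy z hz hyz; omega
    · rw [memU]; tauto
  · rintro S hS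
    rw [Finset.mem_coe, Finset.mem_filter] at hS
    obtain ⟨hS, hiS⟩ := hS
    rw [mem_ps] at hS
    obtain ⟨hsub, hind⟩ := hS
    have key : ∀ x ∈ S, x + h < i ∨ x = i ∨ i + h < x := by
      intro x hx
      rcases lt_trichotomy x i with hlt | he | hgt
      · exact Or.inl (hind x hx i hiS hlt)
      · exact Or.inr (Or.inl he)
      · exact Or.inr (Or.inr (hind i hiS x hx hgt))
    ext x
    simp only [Finset.mem_union, Finset.mem_singleton, Finset.mem_image, Finset.mem_filter]
    constructor
    · rintro ((⟨hx, _⟩ | rfl) | ⟨y, ⟨⟨z, ⟨hz, hzi⟩, rfl⟩, rfl⟩⟩)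
      · exact hx
      · exact hiS
      · have := key z hz
        have : z - (i + h) + (i + h) = z := by omega
        rwa [this]
    · intro hx
      have := key x hx
      rcases this with h1 | rfl | h3
      · exact Or.inl (Or.inl ⟨hx, by omega⟩)
      · exact Or.inl (Or.inr rfl)
      · refine Or.inr ⟨x - (i + h), ⟨x, ⟨hx, by omega⟩, rfl⟩, by omega⟩
  · rintro ⟨A, B⟩ hp
    rw [Finset.mem_coe, Finset.mem_product, mem_ps, mem_ps] at hp
    obtain ⟨⟨hAsub, hAind⟩, hBsub, hBind⟩ := hp
    have hA : ∀ x ∈ A, x < i := by intro x hx; have := hAsub x hx; omega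
    have hB : ∀ y ∈ B, 1 ≤ y ∧ y + i + h ≤ n := by intro y hy; have := hBsub y hy; omega
    simp only [Prod.mk.injEq]
    constructor
    · ext x
      simp only [Finset.mem_filter, Finset.mem_union, Finset.mem_singleton, Finset.mem_image]
      constructor
      · rintro ⟨(hx | rfl) | ⟨y, hy, rfl⟩, hxi⟩
        · exact hx
        · omega
        · have := hB y hy; omega
      · intro hx; exact ⟨Or.inl (Or.inl hx), hA x hx⟩
    · ext y
      simp only [Finset.mem_image, Finset.mem_filter, Finset.mem_union, Finset.mem_singleton]
      constructor
      · rintro ⟨x, ⟨(hx | rfl) | ⟨z, hz, rfl⟩, hxi⟩, rfl⟩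
        · have := hA x hx; omega
        · omega
        · have : z + (i + h) - (i + h) = z := by omega
          rwa [this]
      · intro hy
        have := hB y hy
        exact ⟨y + (i + h), ⟨Or.inr ⟨y, hy, rfl⟩, by omega⟩, by omega⟩
end

section
/- For k ≥ 2, the number of independent k-subsets of the h-th power of a cycle on n vertices equals (n/k) * C(n - h*k - 1, k - 1). -/
open Finset
def rk (S : Finset ℕ) (x : ℕ) : ℕ := (S.filter (· < x)).card

lemma rk_lt {S : Finset ℕ} {x y : ℕ} (hx : x ∈ S) (hxy : x < y) : rk S x < rk S y := by
  apply card_lt_card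
  have hsub : S.filter (· < x) ⊆ S.filter (· < y) := by
    intro a ha
    simp only [mem_filter] at *
    exact ⟨ha.1, ha.2.trans hxy⟩
  exact (ssubset_iff_of_subset hsub).mpr
    ⟨x, mem_filter.mpr ⟨hx, hxy⟩, by simp [mem_filter]⟩

lemma rk_lt_card {S : Finset ℕ} {x : ℕ} (hx : x ∈ S) : rk S x < S.card :=
  card_lt_card ((ssubset_iff_of_subset (filter_subset _ _)).mpr ⟨x, hx, by simp⟩)

lemma chain_le {S : Finset ℕ} {h : ℕ} (hg : ∀ i ∈ S, ∀ j ∈ S, i < j → i + h < j) :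
    ∀ y ∈ S, ∀ x ∈ S, x < y → x + h * (rk S y - rk S x) + (rk S y - rk S x) ≤ y := by
  intro y
  induction y using Nat.strong_induction_on with
  | _ y ih =>
    intro hy x hx hxy
    have hF : x ∈ S.filter (· < y) := mem_filter.mpr ⟨hx, hxy⟩
    have hne : (S.filter (· < y)).Nonempty := ⟨x, hF⟩
    set z := (S.filter (· < y)).max' hne with hz
    have hzF : z ∈ S.filter (· < y) := max'_mem _ hne
    have hzS : z ∈ S := (mem_filter.mp hzF).1
    have hzy : z < y := (mem_filter.mp hzF).2
    have hgap : z + h < y := hg z hzS y hy hzy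
    have hxz : x ≤ z := le_max' _ x hF
    have hry : rk S y = rk S z + 1 := by
      have heq : S.filter (· < y) = insert z (S.filter (· < z)) := by
        ext a
        simp only [mem_filter, mem_insert]
        constructor
        · rintro ⟨haS, hay⟩
          rcases lt_or_eq_of_le (le_max' (S.filter (· < y)) a (mem_filter.mpr ⟨haS, hay⟩)) with h' | h'
          · exact Or.inr ⟨haS, h'⟩
          · exact Or.inl h'
        · rintro (rfl | ⟨haS, haz⟩)
          · exact ⟨hzS, hzy⟩
          · exact ⟨haS, haz.trans hzy⟩
      rw [rk, rk, heq, card_insert_of_notMem (by simp [mem_filter])]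
    rcases eq_or_lt_of_le hxz with heq | hxz'
    · have h0 : rk S x = rk S z := by rw [heq]
      have h1 : rk S y - rk S x = 1 := by omega
      rw [h1]
      omega
    · have hih := ih z hzy hzS x hx hxz'
      have hrxz : rk S x < rk S z := rk_lt hx hxz'
      have h1 : rk S y - rk S x = (rk S z - rk S x) + 1 := by omega
      rw [h1, Nat.mul_succ]
      omega

lemma rk_lb {S : Finset ℕ} {m h : ℕ} (hS : S ⊆ Finset.Icc 1 m)
    (hg : ∀ i ∈ S, ∀ j ∈ S, i < j → i + h < j) {x : ℕ} (hx : x ∈ S) :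
    1 + h * rk S x + rk S x ≤ x := by
  have hne : S.Nonempty := ⟨x, hx⟩
  have hx0S : S.min' hne ∈ S := min'_mem _ _
  have h1 : 1 ≤ S.min' hne := (mem_Icc.mp (hS hx0S)).1
  have hr0 : rk S (S.min' hne) = 0 := by
    rw [rk, card_eq_zero, filter_eq_empty_iff]
    intro a ha
    exact not_lt.mpr (min'_le S a ha)
  rcases eq_or_lt_of_le (S.min'_le x hx) with heq | hlt
  · rw [← heq, hr0]
    omega
  · have := chain_le hg x hx _ hx0S hlt
    rw [hr0, Nat.sub_zero] at this
    omega

lemma rk_ub {S : Finset ℕ} {m h : ℕ} (hS : S ⊆ Finset.Icc 1 m)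
    (hg : ∀ i ∈ S, ∀ j ∈ S, i < j → i + h < j) {x : ℕ} (hx : x ∈ S) :
    x + h * ((S.card - 1) - rk S x) + ((S.card - 1) - rk S x) ≤ m := by
  have hne : S.Nonempty := ⟨x, hx⟩
  have hx1S : S.max' hne ∈ S := max'_mem _ _
  have hx1m : S.max' hne ≤ m := (mem_Icc.mp (hS hx1S)).2
  have hr1 : rk S (S.max' hne) = S.card - 1 := by
    have heq : S.filter (· < S.max' hne) = S.erase (S.max' hne) := by
      ext a
      simp only [mem_filter, mem_erase]
      constructor
      · rintro ⟨h1, h2⟩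
        exact ⟨Nat.ne_of_lt h2, h1⟩
      · rintro ⟨hne', ha⟩
        exact ⟨ha, lt_of_le_of_ne (le_max' _ a ha) hne'⟩
    rw [rk, heq, card_erase_of_mem hx1S]
  rcases eq_or_lt_of_le (S.le_max' x hx) with heq | hlt
  · have h3 : rk S x = S.card - 1 := by rw [heq]; exact hr1
    have hxm : x ≤ m := (mem_Icc.mp (hS hx)).2
    have h2 : (S.card - 1) - rk S x = 0 := by omega
    rw [h2]
    omega
  · have hc := chain_le hg _ hx1S x hx hlt
    rw [hr1] at hc
    omega

lemma injOn_of_mono {S : Finset ℕ} {f : ℕ → ℕ}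
    (hf : ∀ a ∈ S, ∀ b ∈ S, a < b → f a < f b) : Set.InjOn f S := by
  intro a ha b hb hab
  rcases Nat.lt_trichotomy a b with h' | h' | h'
  · exact absurd hab (Nat.ne_of_lt (hf a ha b hb h'))
  · exact h'
  · exact absurd hab.symm (Nat.ne_of_lt (hf b hb a ha h'))

lemma rk_image {S : Finset ℕ} {f : ℕ → ℕ} (hf : ∀ a ∈ S, ∀ b ∈ S, a < b → f a < f b)
    {x : ℕ} (hx : x ∈ S) : rk (S.image f) (f x) = rk S x := by
  have heq : (S.image f).filter (· < f x) = (S.filter (· < x)).image f := by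
    ext b
    simp only [mem_filter, mem_image]
    constructor
    · rintro ⟨⟨a, haS, rfl⟩, hlt⟩
      refine ⟨a, ⟨haS, ?_⟩, rfl⟩
      by_contra hge
      push_neg at hge
      rcases eq_or_lt_of_le hge with rfl | h'
      · exact absurd hlt (lt_irrefl _)
      · exact absurd hlt (not_lt.mpr (le_of_lt (hf x hx a haS h')))
    · rintro ⟨a, ⟨haS, hax⟩, rfl⟩
      exact ⟨⟨a, haS, rfl⟩, hf a haS x hx hax⟩
  rw [rk, heq, card_image_of_injOn
    ((injOn_of_mono hf).mono (Finset.coe_subset.mpr (filter_subset _ _)))]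
  rfl

lemma mem_pathSubsets_s13 {m h : ℕ} {S : Finset ℕ} :
    S ∈ pathSubsets m h ↔ S ⊆ Finset.Icc 1 m ∧ ∀ i ∈ S, ∀ j ∈ S, i < j → i + h < j := by
  simp [pathSubsets, mem_filter, mem_powerset]

lemma pathCount_eq (m h k : ℕ) : pathCount m h k = Nat.choose (m - h * (k - 1)) k := by
  have hR : Nat.choose (m - h * (k - 1)) k
      = ((Finset.Icc 1 (m - h * (k - 1))).powersetCard k).card := by
    rw [card_powersetCard, Nat.card_Icc, Nat.add_sub_cancel]
  rw [pathCount, hR]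
  -- helper facts about sets on the left
  have hmonoL : ∀ S ∈ (pathSubsets m h).filter (fun S => S.card = k),
      ∀ a ∈ S, ∀ b ∈ S, a < b → a - h * rk S a < b - h * rk S b := by
    intro S hS a ha b hb hab
    obtain ⟨hSp, hcard⟩ := mem_filter.mp hS
    obtain ⟨hsub, hg⟩ := mem_pathSubsets_s13.mp hSp
    have h1 := chain_le hg b hb a ha hab
    have h2 := rk_lt ha hab
    have h3 := rk_lb hsub hg ha
    have h4 : h * rk S a + h * (rk S b - rk S a) = h * rk S b := by
      rw [← Nat.mul_add]
      congr 1
      omega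
    omega
  have hmonoR : ∀ T ∈ (Finset.Icc 1 (m - h * (k - 1))).powersetCard k,
      ∀ a ∈ T, ∀ b ∈ T, a < b → a + h * rk T a < b + h * rk T b := by
    intro T _ a ha b hb hab
    have h2 := rk_lt ha hab
    have h4 : h * rk T a ≤ h * rk T b := Nat.mul_le_mul_left h (le_of_lt h2)
    omega
  refine card_bij' (fun S _ => S.image (fun x => x - h * rk S x))
    (fun T _ => T.image (fun y => y + h * rk T y)) ?hi ?hj ?li ?ri
  case hi =>
    intro S hS
    obtain ⟨hSp, hcard⟩ := mem_filter.mp hS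
    obtain ⟨hsub, hg⟩ := mem_pathSubsets_s13.mp hSp
    rw [mem_powersetCard]
    constructor
    · intro y hy
      obtain ⟨x, hx, rfl⟩ := mem_image.mp hy
      have h3 := rk_lb hsub hg hx
      have h5 := rk_ub hsub hg hx
      have h6 := rk_lt_card hx
      rw [hcard] at h5 h6
      have h4 : h * rk S x + h * ((k - 1) - rk S x) = h * (k - 1) := by
        rw [← Nat.mul_add]
        congr 1
        omega
      rw [mem_Icc]
      omega
    · rw [card_image_of_injOn (injOn_of_mono (hmonoL S hS)), hcard]
  case hj =>
    intro T hT
    obtain ⟨hsub, hcard⟩ := mem_powersetCard.mp hT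
    rw [mem_filter, mem_pathSubsets_s13]
    refine ⟨⟨?_, ?_⟩, ?_⟩
    · intro y hy
      obtain ⟨x, hx, rfl⟩ := mem_image.mp hy
      have h1 := mem_Icc.mp (hsub hx)
      have h6 := rk_lt_card hx
      rw [hcard] at h6
      have h4 : h * rk T x ≤ h * (k - 1) := Nat.mul_le_mul_left h (by omega)
      rw [mem_Icc]
      omega
    · intro u hu v hv huv
      obtain ⟨a, ha, rfl⟩ := mem_image.mp hu
      obtain ⟨b, hb, rfl⟩ := mem_image.mp hv
      have hab : a < b := by
        rcases Nat.lt_trichotomy a b with h' | h' | h'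
        · exact h'
        · subst h'; omega
        · exact absurd huv (not_lt.mpr (le_of_lt (hmonoR T hT b hb a ha h')))
      have h2 := rk_lt ha hab
      have h4 : h * (rk T a + 1) ≤ h * rk T b := Nat.mul_le_mul_left h h2
      rw [Nat.mul_succ] at h4
      omega
    · rw [card_image_of_injOn (injOn_of_mono (hmonoR T hT)), hcard]
  case li =>
    intro S hS
    obtain ⟨hSp, hcard⟩ := mem_filter.mp hS
    obtain ⟨hsub, hg⟩ := mem_pathSubsets_s13.mp hSp
    rw [Finset.image_image]
    have : ∀ x ∈ S, ((fun y => y + h * rk (S.image (fun x => x - h * rk S x)) y) ∘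
        (fun x => x - h * rk S x)) x = id x := by
      intro x hx
      have h1 := rk_image (hmonoL S hS) hx
      simp only [Function.comp_apply, id_eq, h1]
      have h3 := rk_lb hsub hg hx
      omega
    rw [Finset.image_congr this, Finset.image_id]
  case ri =>
    intro T hT
    rw [Finset.image_image]
    have : ∀ y ∈ T, ((fun x => x - h * rk (T.image (fun y => y + h * rk T y)) x) ∘
        (fun y => y + h * rk T y)) y = id y := by
      intro y hy
      have h1 := rk_image (hmonoR T hT) hy
      simp only [Function.comp_apply, id_eq, h1]
      omega
    rw [Finset.image_congr this, Finset.image_id]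

def Dm (n v u : ℕ) : ℕ := if u < v then u + n - v else u - v
def Em (n h v t : ℕ) : ℕ := if v + t + h ≤ n then v + t + h else v + t + h - n

lemma mem_cycleSubsets {n h : ℕ} {S : Finset ℕ} :
    S ∈ cycleSubsets n h ↔ S ⊆ Finset.Icc 1 n ∧
      ∀ i ∈ S, ∀ j ∈ S, i < j → i + h < j ∧ j + h < n + i := by
  simp [cycleSubsets, mem_filter, mem_powerset]

lemma D_bounds {n h v u : ℕ} {S : Finset ℕ} (hS : S ∈ cycleSubsets n h) (hv : v ∈ S)
    (hu : u ∈ S) (hne : u ≠ v) : h + 1 ≤ Dm n v u ∧ Dm n v u + h + 1 ≤ n := by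
  obtain ⟨hsub, hc⟩ := mem_cycleSubsets.mp hS
  have hu1 := mem_Icc.mp (hsub hu)
  have hv1 := mem_Icc.mp (hsub hv)
  rcases Nat.lt_trichotomy u v with h' | h' | h'
  · have := hc u hu v hv h'
    simp only [Dm, if_pos h']
    omega
  · exact absurd h' hne
  · have := hc v hv u hu h'
    simp only [Dm, if_neg (by omega : ¬ u < v)]
    omega

lemma D_gap {n h v : ℕ} {S : Finset ℕ} (hS : S ∈ cycleSubsets n h) (hv : v ∈ S)
    {u u' : ℕ} (hu : u ∈ S) (hu' : u' ∈ S) (hne : u ≠ v) (hne' : u' ≠ v) (hlt : u < u') :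
    Dm n v u + h < Dm n v u' ∨ Dm n v u' + h < Dm n v u := by
  obtain ⟨hsub, hc⟩ := mem_cycleSubsets.mp hS
  have hb := mem_Icc.mp (hsub hu)
  have hb' := mem_Icc.mp (hsub hu')
  have hbv := mem_Icc.mp (hsub hv)
  have hcu := hc u hu u' hu' hlt
  simp only [Dm]
  split_ifs <;> omega

lemma E_D {n h v t : ℕ} (hv1 : 1 ≤ v) (hv2 : v ≤ n) (ht1 : 1 ≤ t) (ht2 : t + 2*h + 1 ≤ n) :
    Dm n v (Em n h v t) = t + h ∧ 1 ≤ Em n h v t ∧ Em n h v t ≤ n ∧ Em n h v t ≠ v := by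
  simp only [Dm, Em]
  split_ifs <;> omega

lemma D_E {n h v u : ℕ} (hv1 : 1 ≤ v) (hv2 : v ≤ n) (hu1 : 1 ≤ u) (hu2 : u ≤ n)
    (hne : u ≠ v) (hd1 : h + 1 ≤ Dm n v u) (hd2 : Dm n v u + h + 1 ≤ n) :
    Em n h v (Dm n v u - h) = u := by
  simp only [Dm, Em] at *
  split_ifs at * <;> omega

set_option maxHeartbeats 2000000 in
lemma cycle_pointed (n h k : ℕ) (hk : 2 ≤ k) :
    k * cycleCount n h k = n * pathCount (n - 2*h - 1) h (k - 1) := by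
  classical
  set A := (cycleSubsets n h).filter (fun S => S.card = k) with hA
  set B := (pathSubsets (n - 2*h - 1) h).filter (fun S => S.card = k - 1) with hB
  have h1 : (A.sigma (fun S => S)).card = k * A.card := by
    rw [card_sigma, Finset.sum_congr rfl (fun S hS => (mem_filter.mp hS).2),
      Finset.sum_const, smul_eq_mul, Nat.mul_comm]
  have h2 : ((Finset.Icc 1 n) ×ˢ B).card = n * B.card := by
    rw [card_product, Nat.card_Icc, Nat.add_sub_cancel]
  have key : (A.sigma (fun S => S)).card = ((Finset.Icc 1 n) ×ˢ B).card := by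
    refine card_bij' (fun p _ => (p.2, ((p.1.erase p.2).image (fun u => Dm n p.2 u - h))))
      (fun q _ => (⟨insert q.1 (q.2.image (Em n h q.1)), q.1⟩ : Σ _ : Finset ℕ, ℕ))
      ?hi ?hj ?li ?ri
    case hi =>
      rintro ⟨S, v⟩ hp
      dsimp only
      rw [mem_sigma] at hp
      dsimp only at hp
      obtain ⟨hSA, hvS⟩ := hp
      obtain ⟨hSc, hcard⟩ := mem_filter.mp hSA
      obtain ⟨hsub, hc⟩ := mem_cycleSubsets.mp hSc
      have hbnd : ∀ u ∈ S.erase v, h + 1 ≤ Dm n v u ∧ Dm n v u + h + 1 ≤ n := fun u hu =>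
        D_bounds hSc hvS (mem_erase.mp hu).2 (mem_erase.mp hu).1
      have hinj : Set.InjOn (fun u => Dm n v u - h) (S.erase v) := by
        intro a ha' b hb' heq
        have ha := mem_coe.mp ha'
        have hb := mem_coe.mp hb'
        have hba := hbnd a ha
        have hbb := hbnd b hb
        dsimp only at heq
        by_contra hne2
        rcases Nat.lt_or_ge a b with h' | h'
        · have := D_gap hSc hvS (mem_erase.mp ha).2 (mem_erase.mp hb).2
            (mem_erase.mp ha).1 (mem_erase.mp hb).1 h'
          omega
        · have h'' : b < a := by omega
          have := D_gap hSc hvS (mem_erase.mp hb).2 (mem_erase.mp ha).2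
            (mem_erase.mp hb).1 (mem_erase.mp ha).1 h''
          omega
      rw [mem_product]
      refine ⟨hsub hvS, ?_⟩
      rw [hB, mem_filter, mem_pathSubsets_s13]
      refine ⟨⟨?_, ?_⟩, ?_⟩
      · intro t ht
        obtain ⟨u, hu, rfl⟩ := mem_image.mp ht
        have := hbnd u hu
        rw [mem_Icc]
        omega
      · intro t ht t' ht' hlt
        obtain ⟨u, hu, rfl⟩ := mem_image.mp ht
        obtain ⟨u', hu', rfl⟩ := mem_image.mp ht'
        have hb1 := hbnd u hu
        have hb2 := hbnd u' hu'
        have hne3 : u ≠ u' := by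
          intro hcon
          subst hcon
          omega
        rcases Nat.lt_or_ge u u' with h' | h'
        · have := D_gap hSc hvS (mem_erase.mp hu).2 (mem_erase.mp hu').2
            (mem_erase.mp hu).1 (mem_erase.mp hu').1 h'
          omega
        · have h'' : u' < u := by omega
          have := D_gap hSc hvS (mem_erase.mp hu').2 (mem_erase.mp hu).2
            (mem_erase.mp hu').1 (mem_erase.mp hu).1 h''
          omega
      · rw [card_image_of_injOn hinj, card_erase_of_mem hvS, hcard]
    case hj =>
      rintro ⟨v, T⟩ hq
      rw [mem_product] at hq
      obtain ⟨hvI, hT⟩ := hq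
      obtain ⟨hv1, hv2⟩ := mem_Icc.mp hvI
      obtain ⟨hTp, hTcard⟩ := mem_filter.mp hT
      obtain ⟨hTsub, hTg⟩ := mem_pathSubsets_s13.mp hTp
      have htb : ∀ t ∈ T, 1 ≤ t ∧ t + 2*h + 1 ≤ n := by
        intro t ht
        have := mem_Icc.mp (hTsub ht)
        omega
      have hED : ∀ t ∈ T, Dm n v (Em n h v t) = t + h ∧ 1 ≤ Em n h v t ∧
          Em n h v t ≤ n ∧ Em n h v t ≠ v := fun t ht =>
        E_D hv1 hv2 (htb t ht).1 (htb t ht).2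
      have hvnot : v ∉ T.image (Em n h v) := by
        rw [mem_image]
        rintro ⟨t, ht, hEt⟩
        exact (hED t ht).2.2.2 hEt
      rw [mem_sigma]
      constructor
      · rw [hA, mem_filter, mem_cycleSubsets]
        refine ⟨⟨?_, ?_⟩, ?_⟩
        · intro x hx
          rcases mem_insert.mp hx with rfl | hx'
          · exact mem_Icc.mpr ⟨hv1, hv2⟩
          · obtain ⟨t, ht, rfl⟩ := mem_image.mp hx'
            have := hED t ht
            exact mem_Icc.mpr ⟨this.2.1, this.2.2.1⟩
        · intro i hi j hj hij
          rcases mem_insert.mp hi with rfl | hi'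
          · rcases mem_insert.mp hj with rfl | hj'
            · omega
            · obtain ⟨t, ht, rfl⟩ := mem_image.mp hj'
              have hbt := htb t ht
              simp only [Em] at hij ⊢
              split_ifs at hij ⊢ <;> omega
          · rcases mem_insert.mp hj with rfl | hj'
            · obtain ⟨t, ht, rfl⟩ := mem_image.mp hi'
              have hbt := htb t ht
              simp only [Em] at hij ⊢
              split_ifs at hij ⊢ <;> omega
            · obtain ⟨t, ht, rfl⟩ := mem_image.mp hi'
              obtain ⟨t', ht', rfl⟩ := mem_image.mp hj'
              have hbt := htb t ht
              have hbt' := htb t' ht'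
              rcases Nat.lt_trichotomy t t' with h' | h' | h'
              · have hg := hTg t ht t' ht' h'
                simp only [Em] at hij ⊢
                split_ifs at hij ⊢ <;> omega
              · subst h'
                omega
              · have hg := hTg t' ht' t ht h'
                simp only [Em] at hij ⊢
                split_ifs at hij ⊢ <;> omega
        · have hinjE : Set.InjOn (Em n h v) T := by
            intro a ha' b hb' heq
            have ha := mem_coe.mp ha'
            have hb := mem_coe.mp hb'
            have h1 := (hED a ha).1
            have h2 := (hED b hb).1
            rw [heq] at h1
            omega
          rw [card_insert_of_notMem hvnot, card_image_of_injOn hinjE, hTcard]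
          omega
      · exact mem_insert_self _ _
    case li =>
      rintro ⟨S, v⟩ hp
      rw [mem_sigma] at hp
      dsimp only at hp
      obtain ⟨hSA, hvS⟩ := hp
      obtain ⟨hSc, hcard⟩ := mem_filter.mp hSA
      obtain ⟨hsub, hc⟩ := mem_cycleSubsets.mp hSc
      dsimp only
      have hX : insert v (((S.erase v).image (fun u => Dm n v u - h)).image (Em n h v)) = S := by
        rw [Finset.image_image]
        have heqon : ∀ u ∈ S.erase v,
            (Em n h v ∘ fun u => Dm n v u - h) u = id u := by
          intro u hu
          obtain ⟨hne, huS⟩ := mem_erase.mp hu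
          have hub := mem_Icc.mp (hsub huS)
          have hvb := mem_Icc.mp (hsub hvS)
          have hd := D_bounds hSc hvS huS hne
          simp only [Function.comp_apply, id_eq]
          exact D_E hvb.1 hvb.2 hub.1 hub.2 hne hd.1 hd.2
        rw [Finset.image_congr heqon, Finset.image_id, insert_erase hvS]
      rw [hX]
    case ri =>
      rintro ⟨v, T⟩ hq
      rw [mem_product] at hq
      obtain ⟨hvI, hT⟩ := hq
      obtain ⟨hv1, hv2⟩ := mem_Icc.mp hvI
      obtain ⟨hTp, hTcard⟩ := mem_filter.mp hT
      obtain ⟨hTsub, hTg⟩ := mem_pathSubsets_s13.mp hTp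
      have htb : ∀ t ∈ T, 1 ≤ t ∧ t + 2*h + 1 ≤ n := by
        intro t ht
        have := mem_Icc.mp (hTsub ht)
        omega
      have hED : ∀ t ∈ T, Dm n v (Em n h v t) = t + h ∧ 1 ≤ Em n h v t ∧
          Em n h v t ≤ n ∧ Em n h v t ≠ v := fun t ht =>
        E_D hv1 hv2 (htb t ht).1 (htb t ht).2
      have hvnot : v ∉ T.image (Em n h v) := by
        rw [mem_image]
        rintro ⟨t, ht, hEt⟩
        exact (hED t ht).2.2.2 hEt
      dsimp only
      have hX : ((insert v (T.image (Em n h v))).erase v).image (fun u => Dm n v u - h) = T := by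
        rw [Finset.erase_insert hvnot, Finset.image_image]
        have heqon : ∀ t ∈ T, ((fun u => Dm n v u - h) ∘ Em n h v) t = id t := by
          intro t ht
          have := (hED t ht).1
          simp only [Function.comp_apply, id_eq]
          omega
        rw [Finset.image_congr heqon, Finset.image_id]
      rw [hX]
  rw [cycleCount, ← hA, ← h1, key, h2, pathCount, ← hB]

theorem stmt13 (n h k : ℕ) (hk : 2 ≤ k) :
    k * cycleCount n h k = n * Nat.choose (n - h * k - 1) (k - 1) := by
  rw [cycle_pointed n h k hk, pathCount_eq]
  have e2 : (k - 1) - 1 = k - 2 := by omega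
  rw [e2]
  have e1 : h * (k - 2) + h * 2 = h * k := by
    rw [← Nat.mul_add]
    congr 1
    omega
  congr 2
  omega
end
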